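/- Let (M, μ) be a probability space, T : M → M a measure-preserving transformation, and {e_j}_{j∈ℕ} an orthonormal basis of L²(μ). Let J = {j₁, …, jₙ} be a finite index set, write f = (e_{j₁}, …, e_{jₙ}) : M → ℂ^n, and suppose there are indices l₁, …, l_K ∉ J and maps F₁, …, F_K : ℂ^n → ℂ with e_{l_i} = F_i ∘ f μ-almost everywhere. Assume that for every k ∈ J, ⟨e_k ∘ T, e_l⟩ = 0 for all l ∉ J ∪ {l₁, …, l_K}. Then T admits a finite-dimensional nonlinear representation (f, F): there exists an n×(n+K) complex matrix A such that, μ-almost everywhere, f ∘ T = A · (f, F₁∘f, …, F_K∘f); in particular f ∘ T = F ∘ f almost everywhere for the map F(z) = A·(z, F₁(z), …, F_K(z)). -/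

import Mathlib

open MeasureTheory

/-- Finite-section nonlinear representation. With `{e_j}` an orthonormal basis
of `L²(μ)`, `f = (e_{j₁},…,e_{jₙ})`, and extra basis functions `e_{l₁},…,e_{l_K}` that are
(a.e.) nonlinear functions `Fᵢ ∘ f` of `f`, if `⟨e_k ∘ T, e_p⟩ = 0` for all `k ∈ J` and
`p ∉ J ∪ {l₁,…,l_K}`, then `T` admits a finite-dimensional nonlinear representation
`f ∘ T = A·(f, F₁∘f, …, F_K∘f)` a.e., i.e. `f ∘ T = F ∘ f` a.e. with
`F(z) = A·(z, F₁(z),…,F_K(z))`. -/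
theorem stmt16 {M : Type*} [MeasurableSpace M] (μ : Measure M)
    [IsProbabilityMeasure μ] (T : M → M) (hT : MeasurePreserving T μ μ)
    (e : ℕ → M → ℂ) (he : ∀ j, MemLp (e j) 2 μ)
    (horth : ∀ j k : ℕ,
      ∫ x, e j x * (starRingEnd ℂ) (e k x) ∂μ = if j = k then 1 else 0)
    (htotal : ∀ f : M → ℂ, MemLp f 2 μ →
      (∀ j : ℕ, ∫ x, f x * (starRingEnd ℂ) (e j x) ∂μ = 0) → f =ᵐ[μ] 0)
    {n K : ℕ} (j : Fin n → ℕ) (hjinj : Function.Injective j)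
    (l : Fin K → ℕ) (hl : ∀ i, l i ∉ Set.range j)
    (Fn : Fin K → (Fin n → ℂ) → ℂ)
    (hFn : ∀ i : Fin K,
      (fun x => e (l i) x) =ᵐ[μ] fun x => Fn i (fun k => e (j k) x))
    (hzero : ∀ (k : Fin n) (p : ℕ), p ∉ Set.range j → p ∉ Set.range l →
      ∫ x, e (j k) (T x) * (starRingEnd ℂ) (e p x) ∂μ = 0) :
    ∃ A : Matrix (Fin n) (Fin (n + K)) ℂ,
      ∀ᵐ x ∂μ,
        (fun k : Fin n => e (j k) (T x)) =
          (fun z : Fin n → ℂ =>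
            fun k : Fin n => ∑ i : Fin (n + K), A k i * Fin.append z (fun q => Fn q z) i)
            (fun k : Fin n => e (j k) x) := by
  classical
  -- coefficients
  set c : Fin n → ℕ → ℂ :=
    fun k p => ∫ x, e (j k) (T x) * (starRingEnd ℂ) (e p x) ∂μ with hc
  have heT : ∀ k : Fin n, MemLp (fun x => e (j k) (T x)) 2 μ := fun k =>
    (he (j k)).comp_measurePreserving hT
  have hconj : ∀ p, MemLp (fun x => (starRingEnd ℂ) (e p x)) 2 μ := fun p =>
    MemLp.of_le (he p)
      (RCLike.continuous_conj.comp_aestronglyMeasurable (he p).1)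
      (Filter.Eventually.of_forall fun x => by simp)
  have hmul : ∀ (f g : M → ℂ), MemLp f 2 μ → MemLp g 2 μ →
      Integrable (fun x => f x * g x) μ := by
    intro f g hf hg
    rw [← memLp_one_iff_integrable]
    have h12 : (1 : ENNReal) / 1 = 1 / 2 + 1 / 2 := by
      rw [one_div_one, ENNReal.add_halves]
    have : MemLp (fun x => f x * g x) 1 μ := hg.smul hf
    simpa [Pi.smul_apply, smul_eq_mul] using this
  set S : Finset ℕ := Finset.univ.image j ∪ Finset.univ.image l with hS
  -- main expansion
  have hmain : ∀ k : Fin n,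
      (fun x => e (j k) (T x)) =ᵐ[μ] fun x => ∑ p ∈ S, c k p * e p x := by
    intro k
    have hsumMem : MemLp (fun x => ∑ p ∈ S, c k p * e p x) 2 μ := by
      have h := memLp_finset_sum' (μ := μ) (p := 2) S
        (f := fun p x => c k p * e p x) (fun p _ => (he p).const_mul (c k p))
      have hfe : (fun x => ∑ p ∈ S, c k p * e p x) = ∑ p ∈ S, fun x => c k p * e p x := by
        funext x; simp
      rw [hfe]; exact h
    have hg : MemLp (fun x => e (j k) (T x) - ∑ p ∈ S, c k p * e p x) 2 μ :=
      (heT k).sub hsumMem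
    have hinner : ∀ q : ℕ,
        ∫ x, (e (j k) (T x) - ∑ p ∈ S, c k p * e p x) * (starRingEnd ℂ) (e q x) ∂μ = 0 := by
      intro q
      have hint1 : Integrable (fun x => e (j k) (T x) * (starRingEnd ℂ) (e q x)) μ :=
        hmul _ _ (heT k) (hconj q)
      have hint2 : ∀ p ∈ S,
          Integrable (fun x => c k p * (e p x * (starRingEnd ℂ) (e q x))) μ :=
        fun p _ => (hmul _ _ (he p) (hconj q)).const_mul (c k p)
      have hint2' : Integrable (fun x => ∑ p ∈ S, c k p * (e p x * (starRingEnd ℂ) (e q x))) μ :=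
        integrable_finset_sum S hint2
      have hrw : (fun x => (e (j k) (T x) - ∑ p ∈ S, c k p * e p x) * (starRingEnd ℂ) (e q x))
          = fun x => e (j k) (T x) * (starRingEnd ℂ) (e q x)
              - ∑ p ∈ S, c k p * (e p x * (starRingEnd ℂ) (e q x)) := by
        funext x
        rw [sub_mul, Finset.sum_mul]
        congr 1
        exact Finset.sum_congr rfl fun p _ => by ring
      rw [hrw, integral_sub hint1 hint2', integral_finset_sum S hint2]
      have hterm : ∀ p ∈ S, ∫ x, c k p * (e p x * (starRingEnd ℂ) (e q x)) ∂μ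
          = c k p * (if p = q then 1 else 0) := by
        intro p _
        rw [integral_const_mul, horth p q]
      rw [Finset.sum_congr rfl hterm]
      by_cases hq : q ∈ S
      · rw [Finset.sum_eq_single_of_mem q hq (fun p _ hpq => by simp [hpq])]
        simp [hc]
      · have h1 : q ∉ Set.range j := by
          rintro ⟨i, rfl⟩
          exact hq (Finset.mem_union_left _ (Finset.mem_image_of_mem j (Finset.mem_univ i)))
        have h2 : q ∉ Set.range l := by
          rintro ⟨i, rfl⟩
          exact hq (Finset.mem_union_right _ (Finset.mem_image_of_mem l (Finset.mem_univ i)))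
        have hcq : c k q = 0 := hzero k q h1 h2
        have : ∀ p ∈ S, c k p * (if p = q then 1 else 0) = 0 := by
          intro p hp
          rcases eq_or_ne p q with rfl | hpq
          · exact absurd hp hq
          · simp [hpq]
        rw [Finset.sum_congr rfl this, Finset.sum_const_zero, sub_zero]
        exact hcq
    have := htotal _ hg hinner
    filter_upwards [this] with x hx
    have : e (j k) (T x) - ∑ p ∈ S, c k p * e p x = 0 := hx
    linear_combination this
  -- multiplicity count for l
  set cnt : ℕ → ℕ := fun p => (Finset.univ.filter (fun i : Fin K => l i = p)).card with hcnt
  -- the matrix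
  set A : Matrix (Fin n) (Fin (n + K)) ℂ :=
    fun k => Fin.append (fun k' : Fin n => c k (j k'))
      (fun i : Fin K => c k (l i) / (cnt (l i) : ℂ)) with hA
  refine ⟨A, ?_⟩
  have hFn' : ∀ᵐ x ∂μ, ∀ i : Fin K, e (l i) x = Fn i (fun k => e (j k) x) :=
    (MeasureTheory.ae_all_iff).mpr hFn
  have hmain' : ∀ᵐ x ∂μ, ∀ k : Fin n, e (j k) (T x) = ∑ p ∈ S, c k p * e p x :=
    (MeasureTheory.ae_all_iff).mpr fun k => hmain k
  filter_upwards [hFn', hmain'] with x hx2 hx1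
  funext k
  show e (j k) (T x) = ∑ i : Fin (n + K), A k i * Fin.append (fun k' => e (j k') x)
    (fun q => Fn q (fun k' => e (j k') x)) i
  rw [hx1 k]
  -- split sum over S
  have hdisj : Disjoint (Finset.univ.image j) (Finset.univ.image l) := by
    rw [Finset.disjoint_left]
    rintro p hp hq
    obtain ⟨k', _, rfl⟩ := Finset.mem_image.mp hp
    obtain ⟨i, _, hi⟩ := Finset.mem_image.mp hq
    exact hl i ⟨k', hi.symm⟩
  rw [hS, Finset.sum_union hdisj]
  rw [Fin.sum_univ_add]
  congr 1
  · -- j part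
    rw [Finset.sum_image (fun a _ b _ hab => hjinj hab)]
    refine Finset.sum_congr rfl fun i _ => ?_
    rw [hA]
    simp [Fin.append_left]
  · -- l part
    have hcomp := Finset.sum_comp (s := (Finset.univ : Finset (Fin K)))
      (fun p => c k p / (cnt p : ℂ) * e p x) l
    have hright : ∀ i : Fin K,
        A k (Fin.natAdd n i) * Fin.append (fun k' => e (j k') x)
          (fun q => Fn q (fun k' => e (j k') x)) (Fin.natAdd n i)
        = c k (l i) / (cnt (l i) : ℂ) * e (l i) x := by
      intro i
      rw [hA]
      simp only [Fin.append_right]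
      rw [← hx2 i]
    rw [Finset.sum_congr rfl fun i _ => hright i, hcomp]
    refine Finset.sum_congr rfl fun p hp => ?_
    obtain ⟨i, _, rfl⟩ := Finset.mem_image.mp hp
    have hpos : 0 < cnt (l i) := by
      rw [hcnt]
      exact Finset.card_pos.mpr ⟨i, by simp⟩
    have hne : ((cnt (l i) : ℂ)) ≠ 0 := by
      exact_mod_cast Nat.cast_ne_zero.mpr hpos.ne'
    rw [nsmul_eq_mul]
    field_simp
    rfl
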